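/- Let lg denote the base-2 logarithm, with the convention that t·lg t = 0 when t = 0. For γ ∈ [0, 1/4], set β = 1/2 − 2γ and α = 1/2 + γ, and define H*(γ) = −4γ·lg γ − 2β·lg(β/3), U(γ) = −4γ·lg γ − (8β/5)·lg(2β/5) − (2β/5)·lg(β/5) + 2γ + (8/5)·β, and H(α,β,γ) = −α·lg α − β·lg β − γ·lg γ. Then for all γ ∈ [0, 1/4], it holds that 3·H*(γ) − 2·U(γ) ≥ H(α,β,γ). -/

import Mathlib

/-- The binary logarithm.  (Note `Real.logb 2 0 = 0`, so any summand of the form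
`t·lg t` automatically vanishes at `t = 0`, implementing the convention
`t·lg t = 0` for `t = 0`.) -/
noncomputable def lg (x : ℝ) : ℝ := Real.logb 2 x

lemma lg_aux1 (x : ℝ) (hx : 1/2 ≤ x) : -(1/2 : ℝ) ≤ x * lg x := by
  have hx0 : (0:ℝ) < x := by linarith
  have h2x : (0:ℝ) < 2*x := by linarith
  have hlog2 : (0:ℝ) < Real.log 2 := Real.log_pos (by norm_num)
  have hlog2' : Real.log 2 < 1 := by
    have := Real.log_two_lt_d9; linarith
  have hlog : 1 - (2*x)⁻¹ ≤ Real.log (2*x) := Real.one_sub_inv_le_log_of_pos h2x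
  have h1 : 2*x - 1 ≤ 2*x*Real.log (2*x) := by
    have h2 := mul_le_mul_of_nonneg_left hlog (le_of_lt h2x)
    have h3 : 2*x*(1-(2*x)⁻¹) = 2*x - 1 := by field_simp
    nlinarith [h2, h3]
  have hsplit : Real.log (2*x) = Real.log 2 + Real.log x := by
    rw [Real.log_mul (by norm_num) (ne_of_gt hx0)]
  unfold lg Real.logb
  rw [mul_div_assoc', le_div_iff₀ hlog2]
  nlinarith [mul_nonneg (by linarith : (0:ℝ) ≤ x - 1/2) (by linarith : (0:ℝ) ≤ 1 - Real.log 2)]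

lemma lg_aux2 (x : ℝ) (h0 : 0 ≤ x) (h : x ≤ 1/4) : x * lg x ≤ -2*x := by
  rcases eq_or_lt_of_le h0 with h'|h'
  · simp [← h']
  · have hle : lg x ≤ lg (1/4 : ℝ) := Real.logb_le_logb_of_le (by norm_num) h' h
    have h14 : lg (1/4 : ℝ) = -2 := by
      have hlog2 : Real.log 2 ≠ 0 := ne_of_gt (Real.log_pos (by norm_num))
      rw [lg, Real.logb, show (1/4:ℝ) = 4⁻¹ by norm_num, Real.log_inv,
        show (4:ℝ) = 2^(2:ℕ) by norm_num, Real.log_pow]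
      field_simp
      norm_num
    rw [h14] at hle
    nlinarith [mul_le_mul_of_nonneg_left hle (le_of_lt h')]

lemma lg_aux3 (x : ℝ) (h0 : 0 ≤ x) (h : x ≤ 1/2) : x * lg x ≤ -x := by
  rcases eq_or_lt_of_le h0 with h'|h'
  · simp [← h']
  · have hle : lg x ≤ lg (1/2 : ℝ) := Real.logb_le_logb_of_le (by norm_num) h' h
    have h12 : lg (1/2 : ℝ) = -1 := by
      have hlog2 : Real.log 2 ≠ 0 := ne_of_gt (Real.log_pos (by norm_num))
      rw [lg, Real.logb, show (1/2:ℝ) = 2⁻¹ by norm_num, Real.log_inv]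
      field_simp
    rw [h12] at hle
    nlinarith [mul_le_mul_of_nonneg_left hle (le_of_lt h')]

lemma lg35 : 4 * lg 5 ≤ 6 * lg 3 := by
  have h1 : lg ((5:ℝ)^(4:ℕ)) ≤ lg ((3:ℝ)^(6:ℕ)) :=
    Real.logb_le_logb_of_le (by norm_num) (by norm_num) (by norm_num)
  rw [lg, lg, Real.logb_pow, Real.logb_pow] at h1
  push_cast at h1
  exact h1

lemma lg3_ge : (4:ℝ)/3 ≤ lg 3 := by
  have hlog2 : (0:ℝ) < Real.log 2 := Real.log_pos (by norm_num)
  have h : Real.log ((2:ℝ)^(4:ℕ)) ≤ Real.log ((3:ℝ)^(3:ℕ)) :=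
    Real.log_le_log (by norm_num) (by norm_num)
  rw [Real.log_pow, Real.log_pow] at h
  rw [lg, Real.logb, le_div_iff₀ hlog2]
  push_cast at h
  linarith

/-- For `γ ∈ [0, 1/4]`, with `β = 1/2 − 2γ` and `α = 1/2 + γ`, setting
`H*(γ) = −4γ·lg γ − 2β·lg(β/3)`,
`U(γ) = −4γ·lg γ − (8β/5)·lg(2β/5) − (2β/5)·lg(β/5) + 2γ + (8/5)β` and
`H(α,β,γ) = −α·lg α − β·lg β − γ·lg γ`, we have `3·H*(γ) − 2·U(γ) ≥ H(α,β,γ)`. -/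
theorem three_Hstar_sub_two_U_ge (γ α β : ℝ) (h0 : 0 ≤ γ) (h4 : γ ≤ 1 / 4)
    (hα : α = 1 / 2 + γ) (hβ : β = 1 / 2 - 2 * γ) :
    3 * (-4 * γ * lg γ - 2 * β * lg (β / 3))
      - 2 * (-4 * γ * lg γ - 8 * β / 5 * lg (2 * β / 5) - 2 * β / 5 * lg (β / 5)
          + 2 * γ + 8 / 5 * β)
      ≥ -α * lg α - β * lg β - γ * lg γ := by
  have hA : -(1/2 : ℝ) ≤ α * lg α := lg_aux1 α (by linarith)
  have hG : γ * lg γ ≤ -2*γ := lg_aux2 γ h0 h4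
  rcases eq_or_lt_of_le (show (0:ℝ) ≤ β by linarith) with hb|hb
  · -- β = 0, γ = 1/4
    have hγ : γ = 1/4 := by linarith
    have h14 : lg (1/4 : ℝ) = -2 := by
      have hlog2 : Real.log 2 ≠ 0 := ne_of_gt (Real.log_pos (by norm_num))
      rw [lg, Real.logb, show (1/4:ℝ) = 4⁻¹ by norm_num, Real.log_inv,
        show (4:ℝ) = 2^(2:ℕ) by norm_num, Real.log_pow]
      field_simp
      norm_num
    have h34 : lg (3/4 : ℝ) = lg 3 - 2 := by
      rw [show (3/4:ℝ) = 3/4 by norm_num, lg, lg,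
        Real.logb_div (by norm_num) (by norm_num)]
      have : Real.logb 2 (4:ℝ) = 2 := by
        have h := h14
        rw [lg, Real.logb_div (by norm_num) (by norm_num), Real.logb_one] at h
        linarith
      rw [this]
    subst hγ
    rw [← hb, hα]
    norm_num [lg, Real.logb_zero]
    rw [show Real.logb 2 (1/4 : ℝ) = -2 from h14,
      show Real.logb 2 (3/4 : ℝ) = Real.logb 2 3 - 2 from h34]
    have := lg3_ge
    rw [lg] at this
    nlinarith
  · -- β > 0
    have hβ2 : β ≤ 1/2 := by linarith
    have hB : β * lg β ≤ -β := lg_aux3 β (le_of_lt hb) hβ2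
    have e1 : lg (β/3) = lg β - lg 3 := Real.logb_div (ne_of_gt hb) (by norm_num)
    have e3 : lg (β/5) = lg β - lg 5 := Real.logb_div (ne_of_gt hb) (by norm_num)
    have e2 : lg (2*β/5) = 1 + lg β - lg 5 := by
      rw [lg, Real.logb_div (by positivity) (by norm_num),
        Real.logb_mul (by norm_num) (ne_of_gt hb),
        Real.logb_self_eq_one (by norm_num)]
      rfl
    have hcb : 0 ≤ (6 * lg 3 - 4 * lg 5) * β :=
      mul_nonneg (by linarith [lg35]) (le_of_lt hb)
    rw [e1, e2, e3]
    nlinarith [hA, hG, hB, hcb]
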